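/- Under the same assumptions (λ > 0, C + Cᵀ ⪰ 0, C_{ii} = C_{ii}ᵀ), the quantal response equilibrium is unique: there is exactly one x ∈ ℝ^m_{>0} with each block x_i ∈ Δ_i satisfying x_i = softmax(−(b_i + Σ_j C_{ij} x_j)/λ) for all i ∈ [n]. -/

import Mathlib

open Matrix Finset

def simplex (k : ℕ) : Set (Fin k → ℝ) :=
  {y | ∑ i, y i = 1 ∧ ∀ i, 0 ≤ y i}

noncomputable def softmax {k : ℕ} (z : Fin k → ℝ) : Fin k → ℝ :=
  fun i => Real.exp (z i) / ∑ j, Real.exp (z j)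

open Topology

namespace Stmt4

variable {n : ℕ} {m : Fin n → ℕ}

/-- product of simplices -/
def K (m : Fin n → ℕ) : Set ((i : Fin n) × Fin (m i) → ℝ) :=
  {x | (∀ p, 0 ≤ x p) ∧ ∀ i, ∑ a, x ⟨i, a⟩ = 1}

noncomputable def ent (x : (i : Fin n) × Fin (m i) → ℝ) : ℝ := ∑ p, x p * Real.log (x p)

lemma memK_le_one {x : (i : Fin n) × Fin (m i) → ℝ} (hx : x ∈ K m) (p) : x p ≤ 1 := by
  obtain ⟨i, a⟩ := p
  have h := hx.2 i
  calc x ⟨i, a⟩ ≤ ∑ a', x ⟨i, a'⟩ :=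
        Finset.single_le_sum (fun a' _ => hx.1 ⟨i, a'⟩) (Finset.mem_univ a)
    _ = 1 := h

/-- uniform point -/
noncomputable def unif (m : Fin n → ℕ) : (i : Fin n) × Fin (m i) → ℝ := fun p => (m p.1 : ℝ)⁻¹

lemma unif_pos (hm : ∀ i, 0 < m i) (p) : 0 < unif m p := by
  have : (0:ℝ) < (m p.1 : ℝ) := by exact_mod_cast hm p.1
  exact inv_pos.mpr this

lemma unif_mem (hm : ∀ i, 0 < m i) : unif m ∈ K m := by
  refine ⟨fun p => (unif_pos hm p).le, fun i => ?_⟩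
  have hmi : ((m i : ℝ)) ≠ 0 := by exact_mod_cast (hm i).ne'
  simp only [unif]
  rw [Finset.sum_const, Finset.card_univ, Fintype.card_fin, nsmul_eq_mul]
  field_simp

lemma segMem {x y : (i : Fin n) × Fin (m i) → ℝ} (hx : x ∈ K m) (hy : y ∈ K m)
    {t : ℝ} (h0 : 0 ≤ t) (h1 : t ≤ 1) : x + t • (y - x) ∈ K m := by
  constructor
  · intro p
    have := hx.1 p; have := hy.1 p
    simp only [Pi.add_apply, Pi.smul_apply, Pi.sub_apply, smul_eq_mul]
    nlinarith
  · intro i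
    have hxs := hx.2 i; have hys := hy.2 i
    simp only [Pi.add_apply, Pi.smul_apply, Pi.sub_apply, smul_eq_mul]
    rw [Finset.sum_add_distrib, ← Finset.mul_sum, Finset.sum_sub_distrib, hxs, hys]
    ring

lemma isClosed_K : IsClosed (K m) := by
  have h1 : IsClosed {x : (i : Fin n) × Fin (m i) → ℝ | ∀ p, 0 ≤ x p} := by
    have : {x : (i : Fin n) × Fin (m i) → ℝ | ∀ p, 0 ≤ x p} =
        ⋂ p, {x | 0 ≤ x p} := by ext x; simp [Set.mem_iInter]
    rw [this]
    exact isClosed_iInter fun p =>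
      isClosed_le continuous_const (continuous_apply p)
  have h2 : IsClosed {x : (i : Fin n) × Fin (m i) → ℝ | ∀ i, ∑ a, x ⟨i, a⟩ = 1} := by
    have : {x : (i : Fin n) × Fin (m i) → ℝ | ∀ i, ∑ a, x ⟨i, a⟩ = 1} =
        ⋂ i, {x | ∑ a, x ⟨i, a⟩ = 1} := by ext x; simp [Set.mem_iInter]
    rw [this]
    exact isClosed_iInter fun i =>
      isClosed_eq (continuous_finset_sum _ fun a _ => continuous_apply _) continuous_const
  exact (h1.inter h2)

lemma isCompact_K : IsCompact (K m) := by
  refine IsCompact.of_isClosed_subset (isCompact_univ_pi fun _ => isCompact_Icc (a := (0:ℝ)) (b := 1)) isClosed_K ?_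
  intro x hx
  exact Set.mem_univ_pi.mpr fun p => ⟨hx.1 p, memK_le_one hx p⟩

lemma nonempty_K (hm : ∀ i, 0 < m i) : (K m).Nonempty := ⟨unif m, unif_mem hm⟩

lemma continuous_ent : Continuous (ent (m := m)) :=
  continuous_finset_sum _ fun p _ => Real.continuous_mul_log.comp (continuous_apply p)


lemma phi_grad_ineq {s z : ℝ} (hs : 0 ≤ s) (hz : 0 < z) :
    z * Real.log z + (Real.log z + 1) * (s - z) ≤ s * Real.log s := by
  rcases eq_or_lt_of_le hs with h | h
  · rw [← h]; simp; nlinarith [Real.log_le_sub_one_of_pos hz]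
  · have hd : Real.log (z / s) ≤ z / s - 1 := Real.log_le_sub_one_of_pos (div_pos hz h)
    rw [Real.log_div hz.ne' h.ne'] at hd
    have h2 : s * (Real.log z - Real.log s) ≤ s * (z / s - 1) :=
      mul_le_mul_of_nonneg_left hd h.le
    have h3 : s * (z / s - 1) = z - s := by field_simp
    nlinarith

lemma phi_convex_bound {a c : ℝ} (ha : 0 ≤ a) (hc : 0 ≤ c) {t : ℝ} (h0 : 0 ≤ t) (h1 : t ≤ 1) :
    (a + t * (c - a)) * Real.log (a + t * (c - a)) ≤
      a * Real.log a + t * (c * Real.log c - a * Real.log a) := by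
  have := Real.convexOn_mul_log.2 (Set.mem_Ici.mpr ha) (Set.mem_Ici.mpr hc)
    (by linarith : (0:ℝ) ≤ 1 - t) h0 (by ring)
  simp only [smul_eq_mul] at this
  have he : (1 - t) * a + t * c = a + t * (c - a) := by ring
  rw [he] at this
  nlinarith

lemma log_mono_mul {a b : ℝ} (ha : 0 < a) (hb : 0 < b) :
    0 ≤ (Real.log a - Real.log b) * (a - b) := by
  rcases le_total a b with h | h
  · have := Real.log_le_log ha h
    nlinarith
  · have := Real.log_le_log hb h
    nlinarith

/-- gradient inequality for the entropy: `ent x + ⟨∇ent x, y - x⟩ ≤ ent y`. -/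
lemma ent_grad_ineq {x y : (i : Fin n) × Fin (m i) → ℝ} (hx : ∀ p, 0 < x p)
    (hy : ∀ p, 0 ≤ y p) :
    ent x + ∑ p, (Real.log (x p) + 1) * (y p - x p) ≤ ent y := by
  rw [ent, ent, ← Finset.sum_add_distrib]
  exact Finset.sum_le_sum fun p _ => phi_grad_ineq (hy p) (hx p)


lemma ent_line_hasDerivAt (x d : (i : Fin n) × Fin (m i) → ℝ) (hx : ∀ p, 0 < x p) :
    HasDerivAt (fun t : ℝ => ent (x + t • d)) (∑ p, (Real.log (x p) + 1) * d p) 0 := by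
  have key : HasDerivAt (fun t => ∑ p, (x p + t * d p) * Real.log (x p + t * d p))
      (∑ p, (Real.log (x p) + 1) * d p) 0 := by
    apply HasDerivAt.fun_sum
    intro p _
    have hin : HasDerivAt (fun t : ℝ => x p + t * d p) (d p) 0 :=
      (hasDerivAt_mul_const (d p)).const_add (x p)
    have hout : HasDerivAt (fun s : ℝ => s * Real.log s) (Real.log (x p) + 1) (x p) := by
      have := (hasDerivAt_id (x p)).mul (Real.hasDerivAt_log (hx p).ne')
      exact this.congr_deriv (by simp [mul_inv_cancel₀ (hx p).ne'])
    have hout' : HasDerivAt (fun s : ℝ => s * Real.log s) (Real.log (x p) + 1)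
        ((fun t : ℝ => x p + t * d p) 0) := by simpa using hout
    have := hout'.comp 0 hin
    exact this
  have heq : (fun t : ℝ => ent (x + t • d)) =
      fun t : ℝ => ∑ p, (x p + t * d p) * Real.log (x p + t * d p) := by
    funext t; simp [ent]
  rw [heq]; exact key

lemma deriv_nonneg_of_min (ψ : ℝ → ℝ) (s : ℝ) (hd : HasDerivAt ψ s 0)
    (h : ∀ t, 0 < t → t ≤ 1 → ψ 0 ≤ ψ t) : 0 ≤ s := by
  rw [hasDerivAt_iff_tendsto_slope] at hd
  have hmono : 𝓝[>] (0:ℝ) ≤ 𝓝[≠] (0:ℝ) :=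
    nhdsWithin_mono 0 (fun t ht => ne_of_gt ht)
  have hd' := hd.mono_left hmono
  refine ge_of_tendsto hd' ?_
  filter_upwards [Ioc_mem_nhdsGT_of_mem (by constructor <;> norm_num : (0:ℝ) ∈ Set.Ico 0 1)]
    with t ht
  have := h t ht.1 ht.2
  rw [slope_def_field]
  apply div_nonneg <;> simp <;> linarith [ht.1]


lemma zero_bad (hm : ∀ i, 0 < m i) {x : (i : Fin n) × Fin (m i) → ℝ} (hx : x ∈ K m)
    {p₀ : (i : Fin n) × Fin (m i)} (hx0 : x p₀ = 0)
    {lam' : ℝ} (hlam' : 0 < lam') (A : ℝ) :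
    ∃ t : ℝ, 0 < t ∧ t ≤ 1 ∧
      t * A + lam' * (ent (x + t • (unif m - x)) - ent x) < 0 := by
  set c := unif m with hc
  have hc0 : 0 < c p₀ := unif_pos hm p₀
  set B := ∑ p, (c p * Real.log (c p) - x p * Real.log (x p)) with hB
  have claim : ∀ t : ℝ, 0 < t → t ≤ 1 →
      ent (x + t • (c - x)) - ent x ≤ t * c p₀ * Real.log t + t * B := by
    intro t ht0 ht1
    have hterm : ∀ p, p ≠ p₀ →
        (x p + t * (c p - x p)) * Real.log (x p + t * (c p - x p)) -
          x p * Real.log (x p) ≤ t * (c p * Real.log (c p) - x p * Real.log (x p)) := by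
      intro p _
      have := phi_convex_bound (hx.1 p) (unif_pos hm p).le ht0.le ht1
      linarith
    have hterm0 :
        (x p₀ + t * (c p₀ - x p₀)) * Real.log (x p₀ + t * (c p₀ - x p₀)) -
          x p₀ * Real.log (x p₀) =
        t * c p₀ * Real.log t + t * (c p₀ * Real.log (c p₀)) := by
      rw [hx0]
      have he : (0:ℝ) + t * (c p₀ - 0) = t * c p₀ := by ring
      rw [he, Real.log_mul ht0.ne' hc0.ne']
      simp only [zero_mul, Real.log_zero, mul_zero, sub_zero]
      ring
    have hsplit : ent (x + t • (c - x)) - ent x =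
        ∑ p, ((x p + t * (c p - x p)) * Real.log (x p + t * (c p - x p)) -
          x p * Real.log (x p)) := by
      simp [ent, Finset.sum_sub_distrib]
    rw [hsplit]
    rw [← Finset.add_sum_erase _ _ (Finset.mem_univ p₀)]
    have hBsplit : B = (c p₀ * Real.log (c p₀) - x p₀ * Real.log (x p₀)) +
        ∑ p ∈ Finset.univ.erase p₀, (c p * Real.log (c p) - x p * Real.log (x p)) :=
      (Finset.add_sum_erase _ _ (Finset.mem_univ p₀)).symm
    have hrest : ∑ p ∈ Finset.univ.erase p₀,
        ((x p + t * (c p - x p)) * Real.log (x p + t * (c p - x p)) -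
          x p * Real.log (x p)) ≤
        ∑ p ∈ Finset.univ.erase p₀, t * (c p * Real.log (c p) - x p * Real.log (x p)) :=
      Finset.sum_le_sum fun p hp => hterm p (Finset.ne_of_mem_erase hp)
    rw [← Finset.mul_sum] at hrest
    rw [hterm0]
    rw [hx0] at hBsplit
    simp only [zero_mul, Real.log_zero, mul_zero, sub_zero] at hBsplit
    nlinarith [hrest]
  set t := min (1/2 : ℝ) (Real.exp (-(A + lam' * B + 1) / (lam' * c p₀))) with htdef
  have ht0 : 0 < t := lt_min (by norm_num) (Real.exp_pos _)
  have ht1 : t ≤ 1 := le_trans (min_le_left _ _) (by norm_num)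
  refine ⟨t, ht0, ht1, ?_⟩
  have hlogt : Real.log t ≤ -(A + lam' * B + 1) / (lam' * c p₀) := by
    calc Real.log t ≤ Real.log (Real.exp (-(A + lam' * B + 1) / (lam' * c p₀))) :=
          Real.log_le_log ht0 (min_le_right _ _)
      _ = _ := Real.log_exp _
  have hmul : lam' * c p₀ * Real.log t ≤ -(A + lam' * B + 1) := by
    have h1 : 0 < lam' * c p₀ := by positivity
    calc lam' * c p₀ * Real.log t ≤ lam' * c p₀ * (-(A + lam' * B + 1) / (lam' * c p₀)) :=
          mul_le_mul_of_nonneg_left hlogt h1.le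
      _ = -(A + lam' * B + 1) := by field_simp
  have hent := claim t ht0 ht1
  have : t * A + lam' * (ent (x + t • (c - x)) - ent x) ≤
      t * (A + lam' * B + lam' * c p₀ * Real.log t) := by nlinarith [hent]
  nlinarith [this, hmul, ht0]



lemma quad_bound {a δ t : ℝ} (hδ : |δ| ≤ 1) (ht0 : 0 < t) (ht1 : t ≤ 1) :
    t * δ * (2 * a + t * δ) ≤ t * (2 * |a| + 1) := by
  obtain ⟨hδ1, hδ2⟩ := abs_le.mp hδ
  have h1 : (|a| - a) * (1 + δ) ≥ 0 := by
    have := abs_nonneg a; have := le_abs_self a; nlinarith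
  have h2 : (|a| + a) * (1 - δ) ≥ 0 := by
    have := neg_abs_le a; nlinarith
  have h3 : a * δ ≤ |a| := by nlinarith
  have hδsq : δ * δ ≤ 1 := by nlinarith
  have h4 : t * δ * δ ≤ 1 := by nlinarith [mul_le_mul_of_nonneg_left hδsq ht0.le]
  nlinarith [ht0.le, mul_le_mul_of_nonneg_left h3 ht0.le]

lemma existsProx (hm : ∀ i, 0 < m i) {lamg : ℝ} (hlamg : 0 < lamg)
    (w : (i : Fin n) × Fin (m i) → ℝ) :
    ∃ x ∈ K m, (∀ p, 0 < x p) ∧ ∀ y ∈ K m,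
      0 ≤ ∑ p, (lamg * (Real.log (x p) + 1) + (x p - w p)) * (y p - x p) := by
  classical
  set f : ((i : Fin n) × Fin (m i) → ℝ) → ℝ :=
    fun y => lamg * ent y + (1/2) * ∑ p, (y p - w p)^2 with hf
  have hfc : Continuous f := by
    apply Continuous.add
    · exact continuous_const.mul continuous_ent
    · exact continuous_const.mul (continuous_finset_sum _ fun p _ =>
        ((continuous_apply p).sub continuous_const).pow 2)
  obtain ⟨x, hxK, hmin⟩ :=
    isCompact_K.exists_isMinOn (nonempty_K hm) hfc.continuousOn
  -- positivity
  have hxpos : ∀ p, 0 < x p := by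
    by_contra hcon
    push_neg at hcon
    obtain ⟨p₀, hp₀⟩ := hcon
    have hx0 : x p₀ = 0 := le_antisymm hp₀ (hxK.1 p₀)
    set c := unif m with hc
    set A : ℝ := (1/2) * ∑ p, (2 * |x p - w p| + 1) with hA
    have hquad : ∀ t : ℝ, 0 < t → t ≤ 1 →
        (1/2) * ∑ p, ((x p + t * (c p - x p)) - w p)^2 - (1/2) * ∑ p, (x p - w p)^2
          ≤ t * A := by
      intro t ht0 ht1
      have key : ∀ p : (i : Fin n) × Fin (m i),
          ((x p + t * (c p - x p)) - w p)^2 - (x p - w p)^2 ≤ t * (2 * |x p - w p| + 1) := by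
        intro p
        have hδ : |c p - x p| ≤ 1 := by
          rw [abs_le]
          have h1 := hxK.1 p; have h2 := memK_le_one hxK p
          have h3 := unif_pos hm p; have h4 := memK_le_one (unif_mem hm) p
          constructor <;> nlinarith
        have hq := quad_bound (a := x p - w p) hδ ht0 ht1
        nlinarith [hq]
      calc (1/2) * ∑ p, ((x p + t * (c p - x p)) - w p)^2 - (1/2) * ∑ p, (x p - w p)^2
          = (1/2) * ∑ p, (((x p + t * (c p - x p)) - w p)^2 - (x p - w p)^2) := by
            rw [Finset.sum_sub_distrib]; ring
        _ ≤ (1/2) * ∑ p, t * (2 * |x p - w p| + 1) :=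
            mul_le_mul_of_nonneg_left (Finset.sum_le_sum fun p _ => key p) (by norm_num)
        _ = t * A := by rw [← Finset.mul_sum, hA]; ring
    obtain ⟨t, ht0, ht1, hbad⟩ := zero_bad hm hxK hx0 hlamg A
    have hseg := segMem hxK (unif_mem hm) ht0.le ht1
    have hfle := hmin hseg
    have hev : f (x + t • (c - x)) =
        lamg * ent (x + t • (c - x)) + (1/2) * ∑ p, ((x p + t * (c p - x p)) - w p)^2 := by
      rw [hf]
      simp [Pi.add_apply, Pi.smul_apply, Pi.sub_apply, smul_eq_mul]
    have hfx : f x = lamg * ent x + (1/2) * ∑ p, (x p - w p)^2 := rfl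
    have hq2 := hquad t ht0 ht1
    rw [Set.mem_setOf_eq] at hfle
    rw [← hc] at hbad hfle
    rw [hev, hfx] at hfle
    linarith [hfle, hbad, hq2]
  -- first-order condition
  refine ⟨x, hxK, hxpos, fun y hy => ?_⟩
  set d : (i : Fin n) × Fin (m i) → ℝ := y - x with hd
  have hent := ent_line_hasDerivAt x d hxpos
  have hquadD : HasDerivAt (fun t : ℝ => (1/2) * ∑ p, ((x p + t * d p) - w p)^2)
      (∑ p, (x p - w p) * d p) 0 := by
    have hsum : HasDerivAt (fun t : ℝ => ∑ p, ((x p + t * d p) - w p)^2)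
        (∑ p, 2 * (x p - w p) * d p) 0 := by
      apply HasDerivAt.fun_sum
      intro p _
      have hin : HasDerivAt (fun t : ℝ => (x p + t * d p) - w p) (d p) 0 :=
        ((hasDerivAt_mul_const (d p)).const_add (x p)).sub_const (w p)
      have := hin.pow 2
      exact this.congr_deriv (by simp)
    have := hsum.const_mul (1/2 : ℝ)
    refine this.congr_deriv ?_
    rw [Finset.mul_sum]
    congr 1; funext p; ring
  have hψ : HasDerivAt (fun t : ℝ => f (x + t • d))
      (lamg * (∑ p, (Real.log (x p) + 1) * d p) + ∑ p, (x p - w p) * d p) 0 := by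
    have h1 := (hent.const_mul lamg).add hquadD
    have heq : (fun t : ℝ => f (x + t • d)) =
        fun t : ℝ => lamg * ent (x + t • d) + (1/2) * ∑ p, ((x p + t * d p) - w p)^2 := by
      funext t
      rw [hf]
      simp [Pi.add_apply, Pi.smul_apply, smul_eq_mul]
    rw [heq]
    exact h1
  have hmono : ∀ t : ℝ, 0 < t → t ≤ 1 →
      (fun t : ℝ => f (x + t • d)) 0 ≤ (fun t : ℝ => f (x + t • d)) t := by
    intro t ht0 ht1
    simp only
    have hseg : x + t • d ∈ K m := by
      rw [hd]; exact segMem hxK hy ht0.le ht1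
    have h0 : x + (0:ℝ) • d = x := by simp
    rw [h0]
    exact hmin hseg
  have hge := deriv_nonneg_of_min _ _ hψ hmono
  calc (0:ℝ) ≤ lamg * (∑ p, (Real.log (x p) + 1) * d p) + ∑ p, (x p - w p) * d p := hge
    _ = ∑ p, (lamg * (Real.log (x p) + 1) + (x p - w p)) * (y p - x p) := by
        rw [Finset.mul_sum, ← Finset.sum_add_distrib]
        congr 1; funext p
        rw [hd]; simp [Pi.sub_apply]; ring


lemma proxNonexp {k : Type*} [Fintype k] {lamg : ℝ} (hlamg : 0 < lamg) (u u' w w' : k → ℝ)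
    (hupos : ∀ p, 0 < u p) (hu'pos : ∀ p, 0 < u' p)
    (h1 : 0 ≤ ∑ p, (lamg * (Real.log (u p) + 1) + (u p - w p)) * (u' p - u p))
    (h2 : 0 ≤ ∑ p, (lamg * (Real.log (u' p) + 1) + (u' p - w' p)) * (u p - u' p)) :
    ∑ p, (u p - u' p)^2 ≤ ∑ p, (w p - w' p)^2 := by
  have hlog : 0 ≤ ∑ p, (Real.log (u p) - Real.log (u' p)) * (u p - u' p) :=
    Finset.sum_nonneg fun p _ => log_mono_mul (hupos p) (hu'pos p)
  have hsplit : ∑ p, ((lamg * (Real.log (u p) + 1) + (u p - w p)) * (u' p - u p)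
        + (lamg * (Real.log (u' p) + 1) + (u' p - w' p)) * (u p - u' p))
      = ∑ p, (-(lamg * ((Real.log (u p) - Real.log (u' p)) * (u p - u' p)))
        - (u p - u' p)^2 + (w p - w' p) * (u p - u' p)) :=
    Finset.sum_congr rfl fun p _ => by ring
  have hadd : 0 ≤ ∑ p, ((lamg * (Real.log (u p) + 1) + (u p - w p)) * (u' p - u p)
      + (lamg * (Real.log (u' p) + 1) + (u' p - w' p)) * (u p - u' p)) := by
    rw [Finset.sum_add_distrib]; linarith
  rw [hsplit] at hadd
  simp only [Finset.sum_add_distrib, Finset.sum_sub_distrib, Finset.sum_neg_distrib,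
    ← Finset.mul_sum] at hadd
  set S := ∑ p, (w p - w' p) * (u p - u' p) with hS
  set Du := ∑ p, (u p - u' p)^2 with hDu
  set Dw := ∑ p, (w p - w' p)^2 with hDw
  have hDu0 : 0 ≤ Du := Finset.sum_nonneg fun p _ => sq_nonneg _
  have hDw0 : 0 ≤ Dw := Finset.sum_nonneg fun p _ => sq_nonneg _
  have hDuS : Du ≤ S := by nlinarith [mul_nonneg hlamg.le hlog]
  have hCS : S^2 ≤ Dw * Du := by
    rw [hS, hDw, hDu]; exact Finset.sum_mul_sq_le_sq_mul_sq _ _ _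
  nlinarith [hCS, hDuS, hDu0, hDw0]

lemma sq_add3 (a b c : ℝ) : (a + b + c)^2 ≤ 3*(a^2 + b^2 + c^2) := by
  nlinarith [sq_nonneg (a - b), sq_nonneg (a - c), sq_nonneg (b - c)]

set_option maxHeartbeats 1000000 in
lemma regularized (hm : ∀ i, 0 < m i) (bb : (i : Fin n) × Fin (m i) → ℝ)
    (C : Matrix ((i : Fin n) × Fin (m i)) ((i : Fin n) × Fin (m i)) ℝ)
    {lam : ℝ} (hlam : 0 < lam)
    (hpsd : ∀ d : (i : Fin n) × Fin (m i) → ℝ, 0 ≤ ∑ p, d p * C.mulVec d p)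
    {ε : ℝ} (hε0 : 0 < ε) (hε1 : ε ≤ 1) :
    ∃ z ∈ K m, (∀ p, 0 < z p) ∧ ∀ y ∈ K m,
      0 ≤ (∑ p, (bb p + C.mulVec z p + ε * z p) * (y p - z p)) + lam * (ent y - ent z) := by
  classical
  set Cε := C + ε • (1 : Matrix ((i : Fin n) × Fin (m i)) ((i : Fin n) × Fin (m i)) ℝ)
    with hCεdef
  have hCεv : ∀ d : (i : Fin n) × Fin (m i) → ℝ,
      Cε.mulVec d = fun p => C.mulVec d p + ε * d p := by
    intro d; funext p
    rw [hCεdef, Matrix.add_mulVec, Matrix.smul_mulVec, Matrix.one_mulVec]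
    simp
  set L2 : ℝ := (∑ p, ∑ q, (Cε p q)^2) + 1 with hL2def
  have hF0 : (0:ℝ) ≤ ∑ p, ∑ q, (Cε p q)^2 :=
    Finset.sum_nonneg fun p _ => Finset.sum_nonneg fun q _ => sq_nonneg _
  have hL21 : 1 ≤ L2 := by rw [hL2def]; linarith
  have hL20 : 0 < L2 := by linarith
  set γ := ε / L2 with hγdef
  have hγ0 : 0 < γ := div_pos hε0 hL20
  set lamg := lam * γ with hlamgdef
  have hlamg : 0 < lamg := mul_pos hlam hγ0
  set κ2 := 1 - ε^2 / L2 with hκ2def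
  have hεsq1 : ε^2 ≤ 1 := by nlinarith
  have hκ20 : 0 ≤ κ2 := by
    rw [hκ2def]
    have : ε^2 / L2 ≤ 1 := (div_le_one hL20).mpr (le_trans hεsq1 hL21)
    linarith
  have hκ21 : κ2 < 1 := by
    rw [hκ2def]
    have : 0 < ε^2 / L2 := div_pos (pow_pos hε0 2) hL20
    linarith
  -- the proximal map
  choose T hTK hTpos hTVI using fun w => existsProx hm hlamg w
  set w : ((i : Fin n) × Fin (m i) → ℝ) → ((i : Fin n) × Fin (m i) → ℝ) :=
    fun x => x - γ • (fun p => bb p + Cε.mulVec x p) with hwdef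
  set Tf : ((i : Fin n) × Fin (m i) → ℝ) → ((i : Fin n) × Fin (m i) → ℝ) :=
    fun x => T (w x) with hTfdef
  -- bounds on Cε
  have hMbound : ∀ d : (i : Fin n) × Fin (m i) → ℝ,
      ∑ p, (Cε.mulVec d p)^2 ≤ L2 * ∑ p, (d p)^2 := by
    intro d
    have hrow : ∀ p, (Cε.mulVec d p)^2 ≤ (∑ q, (Cε p q)^2) * ∑ q, (d q)^2 := by
      intro p
      have := Finset.sum_mul_sq_le_sq_mul_sq Finset.univ (fun q => Cε p q) d
      simpa [Matrix.mulVec, dotProduct] using this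
    have hd0 : (0:ℝ) ≤ ∑ p, (d p)^2 := Finset.sum_nonneg fun p _ => sq_nonneg _
    calc ∑ p, (Cε.mulVec d p)^2 ≤ ∑ p, (∑ q, (Cε p q)^2) * ∑ q, (d q)^2 :=
          Finset.sum_le_sum fun p _ => hrow p
      _ = (∑ p, ∑ q, (Cε p q)^2) * ∑ p, (d p)^2 := by rw [← Finset.sum_mul]
      _ ≤ L2 * ∑ p, (d p)^2 := by rw [hL2def]; nlinarith
  have hMmono : ∀ d : (i : Fin n) × Fin (m i) → ℝ,
      ε * ∑ p, (d p)^2 ≤ ∑ p, d p * Cε.mulVec d p := by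
    intro d
    rw [hCεv d]
    have : ∑ p, d p * (C.mulVec d p + ε * d p)
        = (∑ p, d p * C.mulVec d p) + ε * ∑ p, (d p)^2 := by
      rw [Finset.mul_sum, ← Finset.sum_add_distrib]
      exact Finset.sum_congr rfl fun p _ => by ring
    rw [this]
    have := hpsd d
    linarith
  -- contraction of the forward map
  have hwcon : ∀ x x' : (i : Fin n) × Fin (m i) → ℝ,
      ∑ p, (w x p - w x' p)^2 ≤ κ2 * ∑ p, (x p - x' p)^2 := by
    intro x x'
    have hdm : Cε.mulVec (x - x') = Cε.mulVec x - Cε.mulVec x' := Matrix.mulVec_sub Cε x x'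
    have hwp : ∀ p, w x p - w x' p = (x - x') p - γ * Cε.mulVec (x - x') p := by
      intro p
      rw [hwdef]
      simp only [Pi.sub_apply, Pi.smul_apply, smul_eq_mul, hdm]
      ring
    set d := x - x' with hddef
    have hexp : ∑ p, (w x p - w x' p)^2
        = (∑ p, (d p)^2) - 2*γ*(∑ p, d p * Cε.mulVec d p) + γ^2*(∑ p, (Cε.mulVec d p)^2) := by
      calc ∑ p, (w x p - w x' p)^2
          = ∑ p, ((d p)^2 - 2*γ*(d p * Cε.mulVec d p) + γ^2*((Cε.mulVec d p)^2)) :=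
            Finset.sum_congr rfl fun p _ => by rw [hwp p]; ring
        _ = _ := by
            rw [Finset.sum_add_distrib, Finset.sum_sub_distrib, ← Finset.mul_sum,
              ← Finset.mul_sum]
    have hfact : 1 - 2*γ*ε + γ^2*L2 = κ2 := by
      rw [hγdef, hκ2def]; field_simp; ring
    have h1 := hMbound d
    have h2 := hMmono d
    have hd0 : (0:ℝ) ≤ ∑ p, (d p)^2 := Finset.sum_nonneg fun p _ => sq_nonneg _
    have hb1 : -(2*γ*(∑ p, d p * Cε.mulVec d p)) ≤ -(2*γ*(ε * ∑ p, (d p)^2)) := by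
      have := mul_le_mul_of_nonneg_left h2 (by positivity : (0:ℝ) ≤ 2*γ)
      linarith
    have hb2 : γ^2*(∑ p, (Cε.mulVec d p)^2) ≤ γ^2*(L2 * ∑ p, (d p)^2) :=
      mul_le_mul_of_nonneg_left h1 (sq_nonneg γ)
    rw [hexp]
    calc (∑ p, (d p)^2) - 2*γ*(∑ p, d p * Cε.mulVec d p) + γ^2*(∑ p, (Cε.mulVec d p)^2)
        ≤ (∑ p, (d p)^2) - 2*γ*(ε * ∑ p, (d p)^2) + γ^2*(L2 * ∑ p, (d p)^2) := by linarith
      _ = (1 - 2*γ*ε + γ^2*L2) * ∑ p, (d p)^2 := by ring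
      _ = κ2 * ∑ p, (d p)^2 := by rw [hfact]
  have hTfcon : ∀ x x' : (i : Fin n) × Fin (m i) → ℝ,
      ∑ p, (Tf x p - Tf x' p)^2 ≤ κ2 * ∑ p, (x p - x' p)^2 := by
    intro x x'
    refine le_trans ?_ (hwcon x x')
    exact proxNonexp hlamg (T (w x)) (T (w x')) (w x) (w x')
      (hTpos (w x)) (hTpos (w x'))
      (hTVI (w x) (T (w x')) (hTK (w x')))
      (hTVI (w x') (T (w x)) (hTK (w x)))
  -- the iteration
  set y : ℕ → ((i : Fin n) × Fin (m i) → ℝ) := fun j => Tf^[j] (Tf (unif m)) with hydef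
  have hyK : ∀ j, y j ∈ K m := by
    intro j
    cases j with
    | zero => exact hTK _
    | succ j =>
        rw [hydef]
        simp only [Function.iterate_succ_apply']
        exact hTK _
  have hystep : ∀ j, y (j+1) = Tf (y j) := by
    intro j
    rw [hydef]
    simp only [Function.iterate_succ_apply']
  set D0 := ∑ p, (y 0 p - y 1 p)^2 with hD0def
  have hDrec : ∀ j, ∑ p, (y j p - y (j+1) p)^2 ≤ κ2^j * D0 := by
    intro j
    induction j with
    | zero => simp [hD0def]
    | succ j ih =>
        rw [hystep j, hystep (j+1)]
        calc ∑ p, (Tf (y j) p - Tf (y (j+1)) p)^2 ≤ κ2 * ∑ p, (y j p - y (j+1) p)^2 :=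
              hTfcon _ _
          _ ≤ κ2 * (κ2^j * D0) := mul_le_mul_of_nonneg_left ih hκ20
          _ = κ2^(j+1) * D0 := by ring
  obtain ⟨z, hzK, φ, hφ, hzconv⟩ := isCompact_K.tendsto_subseq hyK
  -- z is a fixed point of Tf
  have hD00 : 0 ≤ D0 := Finset.sum_nonneg fun p _ => sq_nonneg _
  have hnull : Filter.Tendsto (fun j : ℕ => κ2^j * D0) Filter.atTop (𝓝 0) := by
    have := (tendsto_pow_atTop_nhds_zero_of_lt_one hκ20 hκ21).mul_const D0
    simpa using this
  have hsqdz : Filter.Tendsto (fun j => ∑ p, (y (φ j) p - z p)^2) Filter.atTop (𝓝 0) := by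
    have hcont : Continuous fun a : (i : Fin n) × Fin (m i) → ℝ => ∑ p, (a p - z p)^2 :=
      continuous_finset_sum _ fun p _ => ((continuous_apply p).sub continuous_const).pow 2
    have := (hcont.tendsto z).comp hzconv
    simpa [Function.comp_def] using this
  have hfix : Tf z = z := by
    funext p
    have hub : ∀ j : ℕ, (z p - Tf z p)^2 ≤
        3 * ((∑ q, (y (φ j) q - z q)^2) + κ2^j * D0 + κ2 * ∑ q, (y (φ j) q - z q)^2) := by
      intro j
      have e1 : (z p - y (φ j) p)^2 ≤ ∑ q, (y (φ j) q - z q)^2 := by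
        have h0 : (z p - y (φ j) p)^2 = (y (φ j) p - z p)^2 := by ring
        rw [h0]
        exact Finset.single_le_sum (f := fun q => (y (φ j) q - z q)^2)
          (fun q _ => sq_nonneg _) (Finset.mem_univ p)
      have e2 : (y (φ j) p - Tf (y (φ j)) p)^2 ≤ κ2^j * D0 := by
        have h := hDrec (φ j)
        have h2 : (y (φ j) p - y (φ j + 1) p)^2 ≤ ∑ q, (y (φ j) q - y (φ j + 1) q)^2 :=
          Finset.single_le_sum (f := fun q => (y (φ j) q - y (φ j + 1) q)^2)
            (fun q _ => sq_nonneg _) (Finset.mem_univ p)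
        rw [hystep (φ j)] at h2
        have h3 : κ2^(φ j) * D0 ≤ κ2^j * D0 := by
          apply mul_le_mul_of_nonneg_right _ hD00
          exact pow_le_pow_of_le_one hκ20 hκ21.le (hφ.le_apply)
        rw [hystep (φ j)] at h
        exact le_trans (le_trans h2 h) h3
      have e3 : (Tf (y (φ j)) p - Tf z p)^2 ≤ κ2 * ∑ q, (y (φ j) q - z q)^2 := by
        have h2 : (Tf (y (φ j)) p - Tf z p)^2 ≤ ∑ q, (Tf (y (φ j)) q - Tf z q)^2 :=
          Finset.single_le_sum (f := fun q => (Tf (y (φ j)) q - Tf z q)^2)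
            (fun q _ => sq_nonneg _) (Finset.mem_univ p)
        exact le_trans h2 (hTfcon _ _)
      have hdecomp : z p - Tf z p = (z p - y (φ j) p) + (y (φ j) p - Tf (y (φ j)) p)
          + (Tf (y (φ j)) p - Tf z p) := by ring
      have h3 := sq_add3 (z p - y (φ j) p) (y (φ j) p - Tf (y (φ j)) p)
        (Tf (y (φ j)) p - Tf z p)
      rw [hdecomp]
      linarith [e1, e2, e3, h3]
    have hulim : Filter.Tendsto (fun j : ℕ =>
        3 * ((∑ q, (y (φ j) q - z q)^2) + κ2^j * D0 + κ2 * ∑ q, (y (φ j) q - z q)^2))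
        Filter.atTop (𝓝 0) := by
      have := ((hsqdz.add hnull).add (hsqdz.const_mul κ2)).const_mul (3:ℝ)
      simpa using this
    have hle : (z p - Tf z p)^2 ≤ 0 := ge_of_tendsto hulim (Filter.Eventually.of_forall hub)
    have : (z p - Tf z p)^2 = 0 := le_antisymm hle (sq_nonneg _)
    have := sq_eq_zero_iff.mp this
    linarith [this]
  -- unpack the fixed point
  have hzpos : ∀ p, 0 < z p := by
    intro p
    have := hTpos (w z) p
    rw [show T (w z) = Tf z from rfl, hfix] at this
    exact this
  refine ⟨z, hzK, hzpos, fun yy hyy => ?_⟩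
  have hVI := hTVI (w z) yy hyy
  rw [show T (w z) = Tf z from rfl, hfix] at hVI
  have hwz : ∀ p, z p - w z p = γ * (bb p + Cε.mulVec z p) := by
    intro p
    rw [hwdef]
    simp only [Pi.sub_apply, Pi.smul_apply, smul_eq_mul]
    ring
  have hVI2 : 0 ≤ γ * ∑ p, (lam * (Real.log (z p) + 1) + (bb p + Cε.mulVec z p)) * (yy p - z p) := by
    rw [Finset.mul_sum]
    refine le_trans hVI (le_of_eq (Finset.sum_congr rfl fun p _ => ?_))
    rw [hwz p, hlamgdef]
    ring
  have hVI3 : 0 ≤ ∑ p, (lam * (Real.log (z p) + 1) + (bb p + Cε.mulVec z p)) * (yy p - z p) :=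
    nonneg_of_mul_nonneg_right hVI2 hγ0
  have hsplit : ∑ p, (lam * (Real.log (z p) + 1) + (bb p + Cε.mulVec z p)) * (yy p - z p)
      = lam * (∑ p, (Real.log (z p) + 1) * (yy p - z p))
        + ∑ p, (bb p + Cε.mulVec z p) * (yy p - z p) := by
    rw [Finset.mul_sum, ← Finset.sum_add_distrib]
    exact Finset.sum_congr rfl fun p _ => by ring
  have hentineq := ent_grad_ineq hzpos hyy.1 (y := yy)
  have hent2 : lam * (∑ p, (Real.log (z p) + 1) * (yy p - z p)) ≤ lam * (ent yy - ent z) := by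
    apply mul_le_mul_of_nonneg_left _ hlam.le
    linarith
  have hfin : 0 ≤ (∑ p, (bb p + Cε.mulVec z p) * (yy p - z p)) + lam * (ent yy - ent z) := by
    rw [hsplit] at hVI3
    linarith
  have : ∑ p, (bb p + Cε.mulVec z p) * (yy p - z p)
      = ∑ p, (bb p + C.mulVec z p + ε * z p) * (yy p - z p) := by
    refine Finset.sum_congr rfl fun p _ => ?_
    rw [hCεv z]
    ring
  linarith [hfin, this]

lemma psd_sum (C : Matrix ((i : Fin n) × Fin (m i)) ((i : Fin n) × Fin (m i)) ℝ)
    (hC : (C + Cᵀ).PosSemidef) (d : (i : Fin n) × Fin (m i) → ℝ) :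
    0 ≤ ∑ p, d p * C.mulVec d p := by
  have h := hC.dotProduct_mulVec_nonneg d
  have hsd : star d = d := by funext p; simp
  rw [hsd] at h
  have h2 : ∑ p, d p * (Cᵀ.mulVec d) p = ∑ p, d p * (C.mulVec d) p := by
    simp only [Matrix.mulVec, dotProduct, Matrix.transpose_apply, Finset.mul_sum]
    rw [Finset.sum_comm]
    exact Finset.sum_congr rfl fun p _ => Finset.sum_congr rfl fun q _ => by ring
  have h3 : d ⬝ᵥ ((C + Cᵀ) *ᵥ d)
      = (∑ p, d p * (C.mulVec d) p) + ∑ p, d p * (Cᵀ.mulVec d) p := by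
    rw [Matrix.add_mulVec]
    simp only [dotProduct, Pi.add_apply, mul_add]
    rw [Finset.sum_add_distrib]
  rw [h3, h2] at h
  linarith

/-- the equilibrium property from the theorem statement -/
def Equil (b : (i : Fin n) × Fin (m i) → ℝ)
    (C : Matrix ((i : Fin n) × Fin (m i)) ((i : Fin n) × Fin (m i)) ℝ) (lam : ℝ)
    (x : (i : Fin n) × Fin (m i) → ℝ) : Prop :=
  (∀ p, 0 < x p) ∧
  ∀ i : Fin n,
    (fun a => x ⟨i, a⟩) ∈ simplex (m i) ∧
    (fun a => x ⟨i, a⟩) =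
      softmax (fun a => -(b ⟨i, a⟩ + C.mulVec x ⟨i, a⟩) / lam)

lemma equil_log (b : (i : Fin n) × Fin (m i) → ℝ)
    (C : Matrix ((i : Fin n) × Fin (m i)) ((i : Fin n) × Fin (m i)) ℝ)
    {lam : ℝ} (hlam : 0 < lam) {x : (i : Fin n) × Fin (m i) → ℝ}
    (hx : Equil b C lam x) :
    ∃ ρ : Fin n → ℝ, ∀ i (a : Fin (m i)),
      lam * Real.log (x ⟨i, a⟩) + b ⟨i, a⟩ + C.mulVec x ⟨i, a⟩ = ρ i := by
  obtain ⟨hxpos, hxi⟩ := hx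
  refine ⟨fun i => -lam * Real.log (∑ a, Real.exp (-(b ⟨i, a⟩ + C.mulVec x ⟨i, a⟩) / lam)),
    fun i a => ?_⟩
  have he := congrFun (hxi i).2 a
  simp only [softmax] at he
  have hS : 0 < ∑ a', Real.exp (-(b ⟨i, a'⟩ + C.mulVec x ⟨i, a'⟩) / lam) :=
    Finset.sum_pos (fun a' _ => Real.exp_pos _) ⟨a, Finset.mem_univ a⟩
  have hlog : Real.log (x ⟨i, a⟩)
      = -(b ⟨i, a⟩ + C.mulVec x ⟨i, a⟩) / lam
        - Real.log (∑ a', Real.exp (-(b ⟨i, a'⟩ + C.mulVec x ⟨i, a'⟩) / lam)) := by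
    rw [he, Real.log_div (Real.exp_pos _).ne' hS.ne', Real.log_exp]
  rw [hlog]
  field_simp
  ring

lemma equil_unique (b : (i : Fin n) × Fin (m i) → ℝ)
    (C : Matrix ((i : Fin n) × Fin (m i)) ((i : Fin n) × Fin (m i)) ℝ)
    {lam : ℝ} (hlam : 0 < lam) (hC : (C + Cᵀ).PosSemidef)
    {x v : (i : Fin n) × Fin (m i) → ℝ}
    (hx : Equil b C lam x) (hv : Equil b C lam v) : v = x := by
  obtain ⟨ρx, hρx⟩ := equil_log b C hlam hx
  obtain ⟨ρv, hρv⟩ := equil_log b C hlam hv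
  obtain ⟨hxpos, hxi⟩ := hx
  obtain ⟨hvpos, hvi⟩ := hv
  set d : (i : Fin n) × Fin (m i) → ℝ := v - x with hd
  have hS1 : 0 ≤ ∑ p, d p * C.mulVec d p := psd_sum C hC d
  have hterm : ∀ p, 0 ≤ (v p - x p) * (Real.log (v p) - Real.log (x p)) := by
    intro p
    have := log_mono_mul (hvpos p) (hxpos p)
    nlinarith
  have hkey : (∑ p, d p * C.mulVec d p)
      + lam * ∑ p, (v p - x p) * (Real.log (v p) - Real.log (x p))
      = ∑ p, (v p - x p) * (ρv p.1 - ρx p.1) := by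
    have hCd : ∀ p, C.mulVec d p = C.mulVec v p - C.mulVec x p := by
      intro p; rw [hd, Matrix.mulVec_sub]; simp
    rw [Finset.mul_sum, ← Finset.sum_add_distrib]
    refine Finset.sum_congr rfl fun p _ => ?_
    obtain ⟨i, a⟩ := p
    have h1 := hρx i a
    have h2 := hρv i a
    rw [hd]
    simp only [Pi.sub_apply]
    rw [hCd ⟨i, a⟩]
    linear_combination (v ⟨i, a⟩ - x ⟨i, a⟩) * (h2 - h1)
  have hzero : ∑ p, (v p - x p) * (ρv p.1 - ρx p.1) = 0 := by
    rw [← Finset.univ_sigma_univ, Finset.sum_sigma]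
    refine Finset.sum_eq_zero fun i _ => ?_
    have hxs : ∑ a, x ⟨i, a⟩ = 1 := (hxi i).1.1
    have hvs : ∑ a, v ⟨i, a⟩ = 1 := (hvi i).1.1
    have heq : ∑ a, (v ⟨i, a⟩ - x ⟨i, a⟩) * (ρv i - ρx i)
        = ((∑ a, v ⟨i, a⟩) - ∑ a, x ⟨i, a⟩) * (ρv i - ρx i) := by
      rw [← Finset.sum_mul, Finset.sum_sub_distrib]
    rw [heq, hxs, hvs]
    ring
  have hsum0 : ∑ p, (v p - x p) * (Real.log (v p) - Real.log (x p)) ≤ 0 := by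
    nlinarith [hS1, hkey, hzero]
  have hall : ∀ p ∈ Finset.univ, (v p - x p) * (Real.log (v p) - Real.log (x p)) = 0 := by
    have heq0 : ∑ p, (v p - x p) * (Real.log (v p) - Real.log (x p)) = 0 :=
      le_antisymm hsum0 (Finset.sum_nonneg fun p _ => hterm p)
    exact (Finset.sum_eq_zero_iff_of_nonneg fun p _ => hterm p).mp heq0
  funext p
  have h0 := hall p (Finset.mem_univ p)
  rcases lt_trichotomy (v p) (x p) with h | h | h
  · exfalso
    have := Real.log_lt_log (hvpos p) h
    nlinarith
  · exact h
  · exfalso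
    have := Real.log_lt_log (hxpos p) h
    nlinarith

set_option maxHeartbeats 1000000 in
lemma equil_exists (hm : ∀ i, 0 < m i) (b : (i : Fin n) × Fin (m i) → ℝ)
    (C : Matrix ((i : Fin n) × Fin (m i)) ((i : Fin n) × Fin (m i)) ℝ)
    {lam : ℝ} (hlam : 0 < lam) (hC : (C + Cᵀ).PosSemidef) :
    ∃ x, Equil b C lam x := by
  classical
  have hpsd := psd_sum C hC
  have hex : ∀ k : ℕ, ∃ z ∈ K m, (∀ p, 0 < z p) ∧ ∀ y ∈ K m,
      0 ≤ (∑ p, (b p + C.mulVec z p + (1/((k:ℝ)+1)) * z p) * (y p - z p))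
        + lam * (ent y - ent z) := by
    intro k
    refine regularized hm b C hlam hpsd ?_ ?_
    · positivity
    · rw [div_le_one (by positivity)]
      linarith [Nat.cast_nonneg (α := ℝ) k]
  choose z hzK hzpos hzVI using hex
  obtain ⟨x, hxK, φ, hφ, hxconv⟩ := isCompact_K.tendsto_subseq hzK
  -- pass to the limit in the regularized variational inequality
  have hMVI : ∀ y ∈ K m,
      0 ≤ (∑ p, (b p + C.mulVec x p) * (y p - x p)) + lam * (ent y - ent x) := by
    intro y hy
    set G : (((i : Fin n) × Fin (m i)) → ℝ) × ℝ → ℝ := fun u =>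
      (∑ p, (b p + C.mulVec u.1 p + u.2 * u.1 p) * (y p - u.1 p))
        + lam * (ent y - ent u.1) with hGdef
    have hGc : Continuous G := by
      apply Continuous.add
      · apply continuous_finset_sum
        intro p _
        apply Continuous.mul
        · apply Continuous.add
          · apply Continuous.add
            · exact continuous_const
            · have hmv : (fun u : (((i : Fin n) × Fin (m i)) → ℝ) × ℝ => C.mulVec u.1 p)
                  = fun u => ∑ q, C p q * u.1 q := by
                funext u; simp [Matrix.mulVec, dotProduct]
              rw [hmv]
              exact continuous_finset_sum _ fun q _ =>
                continuous_const.mul ((continuous_apply q).comp continuous_fst)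
          · exact continuous_snd.mul ((continuous_apply p).comp continuous_fst)
        · exact continuous_const.sub ((continuous_apply p).comp continuous_fst)
      · exact continuous_const.mul
          (continuous_const.sub (continuous_ent.comp continuous_fst))
    have hεlim : Filter.Tendsto (fun j : ℕ => (1:ℝ)/((φ j : ℝ)+1)) Filter.atTop (𝓝 0) :=
      tendsto_one_div_add_atTop_nhds_zero_nat.comp hφ.tendsto_atTop
    have hpair : Filter.Tendsto (fun j : ℕ => (z (φ j), (1:ℝ)/((φ j : ℝ)+1)))
        Filter.atTop (𝓝 (x, 0)) := hxconv.prodMk_nhds hεlim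
    have hcomp := (hGc.tendsto (x, 0)).comp hpair
    have hge : 0 ≤ G (x, 0) := by
      refine ge_of_tendsto hcomp (Filter.Eventually.of_forall fun j => ?_)
      have hvj := hzVI (φ j) y hy
      simpa [Function.comp, hGdef] using hvj
    have hG0 : G (x, 0) = (∑ p, (b p + C.mulVec x p) * (y p - x p))
        + lam * (ent y - ent x) := by
      rw [hGdef]
      simp
    rw [hG0] at hge
    exact hge
  -- positivity of the limit
  have hxpos : ∀ p, 0 < x p := by
    by_contra hcon
    push_neg at hcon
    obtain ⟨p₀, hp₀⟩ := hcon
    have hx0 : x p₀ = 0 := le_antisymm hp₀ (hxK.1 p₀)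
    obtain ⟨t, ht0, ht1, hbad⟩ := zero_bad hm hxK hx0 hlam
      (∑ p, (b p + C.mulVec x p) * (unif m p - x p))
    have hyt := hMVI (x + t • (unif m - x)) (segMem hxK (unif_mem hm) ht0.le ht1)
    have hlin : ∑ p, (b p + C.mulVec x p) * ((x + t • (unif m - x)) p - x p)
        = t * ∑ p, (b p + C.mulVec x p) * (unif m p - x p) := by
      rw [Finset.mul_sum]
      refine Finset.sum_congr rfl fun p _ => ?_
      simp only [Pi.add_apply, Pi.smul_apply, Pi.sub_apply, smul_eq_mul]
      ring
    rw [hlin] at hyt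
    linarith
  -- linearized first-order condition
  set g : ((i : Fin n) × Fin (m i)) → ℝ :=
    fun p => b p + C.mulVec x p + lam * (Real.log (x p) + 1) with hgdef
  have hFOC : ∀ y ∈ K m, 0 ≤ ∑ p, g p * (y p - x p) := by
    intro y hy
    set d : ((i : Fin n) × Fin (m i)) → ℝ := y - x with hddef
    set S : ℝ := ∑ p, (b p + C.mulVec x p) * d p with hSdef
    have hψ : HasDerivAt (fun t : ℝ => t * S + lam * (ent (x + t • d) - ent x))
        (S + lam * (∑ p, (Real.log (x p) + 1) * d p)) 0 := by
      have h1 : HasDerivAt (fun t : ℝ => t * S) S 0 := hasDerivAt_mul_const S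
      have h2 := ((ent_line_hasDerivAt x d hxpos).sub_const (ent x)).const_mul lam
      exact h1.add h2
    have hmin : ∀ t : ℝ, 0 < t → t ≤ 1 →
        (fun t : ℝ => t * S + lam * (ent (x + t • d) - ent x)) 0 ≤
        (fun t : ℝ => t * S + lam * (ent (x + t • d) - ent x)) t := by
      intro t ht0 ht1
      have hyt := hMVI (x + t • d) (by rw [hddef]; exact segMem hxK hy ht0.le ht1)
      have hlin : ∑ p, (b p + C.mulVec x p) * ((x + t • d) p - x p) = t * S := by
        rw [hSdef, Finset.mul_sum]
        refine Finset.sum_congr rfl fun p _ => ?_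
        simp only [Pi.add_apply, Pi.smul_apply, smul_eq_mul]
        ring
      rw [hlin] at hyt
      simp only [zero_mul, zero_smul, add_zero, sub_self, mul_zero, zero_add]
      linarith
    have hge := deriv_nonneg_of_min _ _ hψ hmin
    calc (0:ℝ) ≤ S + lam * (∑ p, (Real.log (x p) + 1) * d p) := hge
      _ = ∑ p, g p * (y p - x p) := by
          rw [hSdef, Finset.mul_sum, ← Finset.sum_add_distrib]
          refine Finset.sum_congr rfl fun p _ => ?_
          simp only [hgdef, hddef, Pi.sub_apply]
          ring
  -- the gradient is constant on each block
  have hblocki : ∀ i : Fin n, ∀ a a' : Fin (m i), g ⟨i, a'⟩ ≤ g ⟨i, a⟩ := by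
    intro i a a'
    rcases eq_or_ne a a' with rfl | hne
    · exact le_refl _
    · have hneq : (⟨i, a⟩ : (i : Fin n) × Fin (m i)) ≠ ⟨i, a'⟩ := by
        intro h
        injection h with h1 h2
        exact hne h2
      set δ := x ⟨i, a'⟩ with hδdef
      have hδ0 : 0 < δ := hxpos _
      set y : ((i : Fin n) × Fin (m i)) → ℝ := fun p =>
        if p = ⟨i, a⟩ then x ⟨i, a⟩ + δ else if p = ⟨i, a'⟩ then 0 else x p with hydef
      have hyval : ∀ p, y p = x p + δ * (if p = ⟨i, a⟩ then 1 else 0)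
          - δ * (if p = ⟨i, a'⟩ then 1 else 0) := by
        intro p
        simp only [hydef]
        by_cases h1 : p = ⟨i, a⟩
        · subst h1
          rw [if_pos rfl, if_pos rfl, if_neg hneq]
          ring
        · by_cases h2 : p = ⟨i, a'⟩
          · subst h2
            rw [if_neg h1, if_pos rfl, if_neg h1, if_pos rfl, hδdef]
            ring
          · rw [if_neg h1, if_neg h2, if_neg h1, if_neg h2]
            ring
      have hind : ∀ (j : Fin n) (c0 : Fin (m j)),
          ∑ c : Fin (m j), (if (⟨j, c⟩ : (i : Fin n) × Fin (m i)) = ⟨j, c0⟩ then (1:ℝ) else 0)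
            = 1 := by
        intro j c0
        have : ∀ c : Fin (m j),
            (if (⟨j, c⟩ : (i : Fin n) × Fin (m i)) = ⟨j, c0⟩ then (1:ℝ) else 0)
              = if c = c0 then 1 else 0 := by
          intro c
          by_cases h : c = c0
          · subst h; rw [if_pos rfl, if_pos rfl]
          · rw [if_neg (by simp [h]), if_neg h]
        rw [Finset.sum_congr rfl fun c _ => this c, Finset.sum_ite_eq' Finset.univ c0]
        simp
      have hind0 : ∀ (j : Fin n) (q : (i : Fin n) × Fin (m i)), q.1 ≠ j →
          ∑ c : Fin (m j), (if (⟨j, c⟩ : (i : Fin n) × Fin (m i)) = q then (1:ℝ) else 0)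
            = 0 := by
        intro j q hq
        refine Finset.sum_eq_zero fun c _ => ?_
        rw [if_neg]
        intro h
        exact hq (by rw [← h])
      have hyK2 : y ∈ K m := by
        constructor
        · intro p
          simp only [hydef]
          by_cases h1 : p = ⟨i, a⟩
          · rw [if_pos h1]
            have := (hxK.1 ⟨i, a⟩)
            nlinarith
          · by_cases h2 : p = ⟨i, a'⟩
            · rw [if_neg h1, if_pos h2]
            · rw [if_neg h1, if_neg h2]
              exact hxK.1 p
        · intro j
          have hsplit : ∑ c : Fin (m j), y ⟨j, c⟩
              = (∑ c : Fin (m j), x ⟨j, c⟩)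
                + δ * (∑ c : Fin (m j), if (⟨j, c⟩ : (i : Fin n) × Fin (m i)) = ⟨i, a⟩ then (1:ℝ) else 0)
                - δ * (∑ c : Fin (m j), if (⟨j, c⟩ : (i : Fin n) × Fin (m i)) = ⟨i, a'⟩ then (1:ℝ) else 0) := by
            rw [Finset.sum_congr rfl fun c (_ : c ∈ Finset.univ) => hyval ⟨j, c⟩,
              Finset.sum_sub_distrib, Finset.sum_add_distrib, ← Finset.mul_sum, ← Finset.mul_sum]
          rw [hsplit, hxK.2 j]
          rcases eq_or_ne i j with rfl | hij
          · rw [hind i a, hind i a']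
            ring
          · rw [hind0 j ⟨i, a⟩ hij, hind0 j ⟨i, a'⟩ hij]
            ring
      have hvi := hFOC y hyK2
      have hgind : ∀ q : (i : Fin n) × Fin (m i),
          ∑ p, g p * (if p = q then (1:ℝ) else 0) = g q := by
        intro q
        have : ∀ p, g p * (if p = q then (1:ℝ) else 0) = if p = q then g p else 0 := by
          intro p; by_cases h : p = q
          · rw [if_pos h, if_pos h, mul_one]
          · rw [if_neg h, if_neg h, mul_zero]
        rw [Finset.sum_congr rfl fun p _ => this p, Finset.sum_ite_eq' Finset.univ q]
        simp
      have hsum : ∑ p, g p * (y p - x p) = δ * g ⟨i, a⟩ - δ * g ⟨i, a'⟩ := by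
        have hterm : ∀ p, g p * (y p - x p)
            = δ * (g p * (if p = ⟨i, a⟩ then 1 else 0))
              - δ * (g p * (if p = ⟨i, a'⟩ then 1 else 0)) := by
          intro p; rw [hyval p]; ring
        rw [Finset.sum_congr rfl fun p _ => hterm p, Finset.sum_sub_distrib,
          ← Finset.mul_sum, ← Finset.mul_sum, hgind ⟨i, a⟩, hgind ⟨i, a'⟩]
      rw [hsum] at hvi
      nlinarith [hvi, hδ0]
  have hblock : ∀ i : Fin n, ∀ a a' : Fin (m i), g ⟨i, a⟩ = g ⟨i, a'⟩ :=
    fun i a a' => le_antisymm (hblocki i a' a) (hblocki i a a')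
  -- assemble the equilibrium
  refine ⟨x, hxpos, fun i => ⟨⟨hxK.2 i, fun a => hxK.1 ⟨i, a⟩⟩, ?_⟩⟩
  funext a
  simp only [softmax]
  set μ := g ⟨i, ⟨0, hm i⟩⟩ with hμdef
  have hxa : ∀ a' : Fin (m i), x ⟨i, a'⟩
      = Real.exp (μ/lam - 1) * Real.exp (-(b ⟨i, a'⟩ + C.mulVec x ⟨i, a'⟩)/lam) := by
    intro a'
    have hga : b ⟨i, a'⟩ + C.mulVec x ⟨i, a'⟩ + lam * (Real.log (x ⟨i, a'⟩) + 1) = μ :=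
      hblock i a' ⟨0, hm i⟩
    have hlogx : Real.log (x ⟨i, a'⟩)
        = μ/lam - 1 + -(b ⟨i, a'⟩ + C.mulVec x ⟨i, a'⟩)/lam := by
      have h5 : lam * Real.log (x ⟨i, a'⟩)
          = μ - lam - (b ⟨i, a'⟩ + C.mulVec x ⟨i, a'⟩) := by linarith [hga]
      field_simp
      linarith [h5]
    rw [← Real.exp_add, ← hlogx, Real.exp_log (hxpos _)]
  have hS : 0 < ∑ a', Real.exp (-(b ⟨i, a'⟩ + C.mulVec x ⟨i, a'⟩)/lam) :=
    Finset.sum_pos (fun _ _ => Real.exp_pos _) ⟨a, Finset.mem_univ a⟩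
  have hsum1 : Real.exp (μ/lam - 1)
      * (∑ a', Real.exp (-(b ⟨i, a'⟩ + C.mulVec x ⟨i, a'⟩)/lam)) = 1 := by
    rw [Finset.mul_sum]
    calc ∑ a', Real.exp (μ/lam - 1) * Real.exp (-(b ⟨i, a'⟩ + C.mulVec x ⟨i, a'⟩)/lam)
        = ∑ a', x ⟨i, a'⟩ := Finset.sum_congr rfl fun a' _ => (hxa a').symm
      _ = 1 := hxK.2 i
  rw [hxa a, eq_div_iff hS.ne']
  linear_combination Real.exp (-(b ⟨i, a⟩ + C.mulVec x ⟨i, a⟩)/lam) * hsum1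

end Stmt4

/-- uniqueness of the quantal response equilibrium.  Under `λ > 0`,
`C + Cᵀ ⪰ 0`, and symmetry of the diagonal blocks, there is exactly one strictly
positive `x` with blocks in the simplices satisfying
`x_i = softmax(-(b_i + Σ_j C_{ij} x_j)/λ)` for all `i`. -/
theorem stmt4 {n : ℕ} {m : Fin n → ℕ} (hm : ∀ i, 0 < m i)
    (b : ((i : Fin n) × Fin (m i)) → ℝ)
    (C : Matrix ((i : Fin n) × Fin (m i)) ((i : Fin n) × Fin (m i)) ℝ)
    (lam : ℝ) (hlam : 0 < lam)
    (hC : (C + Cᵀ).PosSemidef)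
    (hCii : ∀ i : Fin n, ∀ a b : Fin (m i), C ⟨i, a⟩ ⟨i, b⟩ = C ⟨i, b⟩ ⟨i, a⟩) :
    ∃! x : ((i : Fin n) × Fin (m i)) → ℝ,
      (∀ p, 0 < x p) ∧
      ∀ i : Fin n,
        (fun a => x ⟨i, a⟩) ∈ simplex (m i) ∧
        (fun a => x ⟨i, a⟩) =
          softmax (fun a => -(b ⟨i, a⟩ + C.mulVec x ⟨i, a⟩) / lam) := by
  obtain ⟨x, hx⟩ := Stmt4.equil_exists hm b C hlam hC
  refine ⟨x, hx, fun v hv => ?_⟩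
  exact Stmt4.equil_unique b C hlam hC hx (show Stmt4.Equil b C lam v from hv)
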